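/- Let a ≥ 3 be an integer and p ∈ (0,1) with q = 1 − p, and let z, z' ∈ {1,…,a−1}. If there exists a real constant κ such that B_ν(z) = κ·A_ν(z') for all ν ∈ {1,…,a−1}, then z' = a − z and κ = (p/q)^{a−z}. In other words, the spectral duality relation with a mode-independent coefficient holds between sites z and z' only when they are geometrically symmetric about the midpoint of the interval. -/

import Mathlib

/-- Spectral coefficient `A_ν(w) = (2/a)·(q/p)^{w/2}·sin(πνw/a)·sin(πν/a)`,
with `q = 1 − p`. -/
noncomputable def Acoef (a : ℕ) (p : ℝ) (ν w : ℕ) : ℝ :=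
  (2 / a) * ((1 - p) / p) ^ ((w : ℝ) / 2) *
    Real.sin (Real.pi * ν * w / a) * Real.sin (Real.pi * ν / a)

/-- Spectral coefficient `B_ν(w) = (2/a)·(p/q)^{(a−w)/2}·sin(πν(a−w)/a)·sin(πν/a)`,
with `q = 1 − p`. -/
noncomputable def Bcoef (a : ℕ) (p : ℝ) (ν w : ℕ) : ℝ :=
  (2 / a) * (p / (1 - p)) ^ (((a : ℝ) - w) / 2) *
    Real.sin (Real.pi * ν * ((a : ℝ) - w) / a) * Real.sin (Real.pi * ν / a)

lemma aux_sin (x y D E : ℝ) (hx : x ∈ Set.Ioo 0 Real.pi) (hy : y ∈ Set.Ioo 0 Real.pi)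
    (hD : 0 < D)
    (h1 : D * Real.sin x = E * Real.sin y)
    (h2 : D * Real.sin (2*x) = E * Real.sin (2*y)) :
    x = y ∧ D = E := by
  have hsx : 0 < Real.sin x := Real.sin_pos_of_pos_of_lt_pi hx.1 hx.2
  have hsy : 0 < Real.sin y := Real.sin_pos_of_pos_of_lt_pi hy.1 hy.2
  rw [Real.sin_two_mul, Real.sin_two_mul] at h2
  have h2' : D * Real.sin x * Real.cos x = E * Real.sin y * Real.cos y := by
    linear_combination h2 / 2
  rw [← h1] at h2'
  have hc : Real.cos x = Real.cos y := mul_left_cancel₀ (by positivity) h2'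
  have hxy : x = y := Real.injOn_cos ⟨le_of_lt hx.1, le_of_lt hx.2⟩
    ⟨le_of_lt hy.1, le_of_lt hy.2⟩ hc
  subst hxy
  exact ⟨rfl, mul_right_cancel₀ (ne_of_gt hsx) h1⟩


/-- a mode-independent spectral duality relation
`B_ν(z) = κ·A_ν(z')` for all modes `ν` forces the geometric symmetry
`z' = a − z` and `κ = (p/q)^{a−z}`. -/
theorem stmt_9 (a : ℕ) (ha : 3 ≤ a) (p : ℝ) (hp : p ∈ Set.Ioo (0 : ℝ) 1)
    (z z' : ℕ) (hz : z ∈ Finset.Icc 1 (a - 1)) (hz' : z' ∈ Finset.Icc 1 (a - 1))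
    (κ : ℝ)
    (hdual : ∀ ν ∈ Finset.Icc 1 (a - 1), Bcoef a p ν z = κ * Acoef a p ν z') :
    z' = a - z ∧ κ = (p / (1 - p)) ^ ((a : ℝ) - z) := by
  obtain ⟨hp0, hp1⟩ := hp
  have hq : (0:ℝ) < 1 - p := by linarith
  simp only [Finset.mem_Icc] at hz hz'
  have hza : z ≤ a := by omega
  have hcast : ((a:ℝ) - z) = ((a - z : ℕ) : ℝ) := by
    rw [Nat.cast_sub hza]
  have hapos : (0:ℝ) < a := by positivity
  have hpi := Real.pi_pos
  have h1 := hdual 1 (by simp only [Finset.mem_Icc]; omega)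
  have h2 := hdual 2 (by simp only [Finset.mem_Icc]; omega)
  simp only [Bcoef, Acoef, Nat.cast_one, Nat.cast_ofNat] at h1 h2
  rw [hcast] at h1 h2
  set w : ℕ := a - z with hwdef
  have hw1 : 1 ≤ w := by omega
  set x : ℝ := Real.pi * w / a with hxdef
  set y : ℝ := Real.pi * z' / a with hydef
  have hx : x ∈ Set.Ioo 0 Real.pi := by
    constructor
    · have : (0:ℝ) < w := by exact_mod_cast hw1
      positivity
    · rw [hxdef, div_lt_iff₀ hapos]
      have : (w:ℝ) < a := by exact_mod_cast (by omega : w < a)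
      nlinarith
  have hy : y ∈ Set.Ioo 0 Real.pi := by
    constructor
    · have : (0:ℝ) < z' := by exact_mod_cast hz'.1
      positivity
    · rw [hydef, div_lt_iff₀ hapos]
      have : (z':ℝ) < a := by exact_mod_cast (by omega : z' < a)
      nlinarith
  have harg1 : Real.pi * 1 * (w:ℝ) / a = x := by rw [hxdef]; ring
  have harg2 : Real.pi * 2 * (w:ℝ) / a = 2 * x := by rw [hxdef]; ring
  have harg1' : Real.pi * 1 * (z':ℝ) / a = y := by rw [hydef]; ring
  have harg2' : Real.pi * 2 * (z':ℝ) / a = 2 * y := by rw [hydef]; ring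
  rw [harg1, harg1'] at h1
  rw [harg2, harg2'] at h2
  set D : ℝ := (p / (1 - p)) ^ ((w:ℝ) / 2) with hDdef
  set R : ℝ := ((1 - p) / p) ^ ((z':ℝ) / 2) with hRdef
  have hDpos : 0 < D := Real.rpow_pos_of_pos (by positivity) _
  have hRpos : 0 < R := Real.rpow_pos_of_pos (by positivity) _
  have hs1 : Real.sin (Real.pi * 1 / a) ≠ 0 := by
    apply ne_of_gt
    apply Real.sin_pos_of_pos_of_lt_pi
    · positivity
    · rw [div_lt_iff₀ hapos]
      have : (1:ℝ) < a := by exact_mod_cast (by omega : 1 < a)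
      nlinarith
  have hs2 : Real.sin (Real.pi * 2 / a) ≠ 0 := by
    apply ne_of_gt
    apply Real.sin_pos_of_pos_of_lt_pi
    · positivity
    · rw [div_lt_iff₀ hapos]
      have : (2:ℝ) < a := by exact_mod_cast (by omega : 2 < a)
      nlinarith
  have hA : D * Real.sin x = (κ * R) * Real.sin y := by
    apply mul_left_cancel₀ (show (2 / (a:ℝ)) * Real.sin (Real.pi * 1 / a) ≠ 0 from
      mul_ne_zero (by positivity) hs1)
    linear_combination h1
  have hB : D * Real.sin (2*x) = (κ * R) * Real.sin (2*y) := by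
    apply mul_left_cancel₀ (show (2 / (a:ℝ)) * Real.sin (Real.pi * 2 / a) ≠ 0 from
      mul_ne_zero (by positivity) hs2)
    linear_combination h2
  obtain ⟨hxy, hDE⟩ := aux_sin x y D (κ * R) hx hy hDpos hA hB
  have hwz' : (w:ℝ) = (z':ℝ) := by
    rw [hxdef, hydef] at hxy
    field_simp at hxy
    linarith
  have hwz : z' = w := by exact_mod_cast hwz'.symm
  refine ⟨hwz, ?_⟩
  have hk : κ = D * R⁻¹ := by
    rw [hDE, mul_assoc, mul_inv_cancel₀ (ne_of_gt hRpos), mul_one]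
  have hRinv : R⁻¹ = (p / (1 - p)) ^ ((z':ℝ) / 2) := by
    rw [hRdef, ← inv_div p (1 - p), Real.inv_rpow (by positivity), inv_inv]
  have hz'c : (z':ℝ) = (a:ℝ) - z := by rw [← hwz']; exact hcast.symm
  rw [hk, hRinv, hDdef, ← Real.rpow_add (by positivity)]
  congr 1
  rw [← hcast, hz'c]
  ring
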